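/- Let n ≥ 4 and let H be a Hamiltonian cycle of the complete bipartite graph K_{n,n}. Then the graph G = K_{n,n} − H (the complete bipartite graph with the edges of H removed, i.e. the bipartite complement of the cycle C_{2n}) is 2-swappable. -/

import Mathlib

open SimpleGraph
open scoped Classical

/-- A finite simple graph `G` is 2-swappable if for every edge `e` of `G` there exist a set
`A` of edges of `G` with `e ∈ A` and `|A| ≤ 2`, and a set `B` of edges of the complement of
`G`, such that deleting the edges in `A` and adding the edges in `B` yields a graph
isomorphic to `G`. -/
def TwoSwappable {V : Type} (G : SimpleGraph V) : Prop :=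
  ∀ e ∈ G.edgeSet, ∃ A B : Set (Sym2 V),
    e ∈ A ∧ A ⊆ G.edgeSet ∧ A.ncard ≤ 2 ∧ B ⊆ Gᶜ.edgeSet ∧
    Nonempty ((G.deleteEdges A ⊔ SimpleGraph.fromEdgeSet B) ≃g G)


lemma twoSwappable_of_iso {V W : Type} {G : SimpleGraph V} {G' : SimpleGraph W}
    (φ : G ≃g G') (h : TwoSwappable G) : TwoSwappable G' := by
  have hinj : Function.Injective (Sym2.map ⇑φ) := Sym2.map.injective φ.injective
  have hmem : ∀ (S : Set (Sym2 V)) (u v : W),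
      s(u, v) ∈ Sym2.map ⇑φ '' S ↔ s(φ.symm u, φ.symm v) ∈ S := by
    intro S u v
    constructor
    · rintro ⟨f, hf, heq⟩
      have : f = s(φ.symm u, φ.symm v) := by
        apply hinj
        rw [heq]
        simp [Sym2.map_pair_eq]
      rwa [← this]
    · intro hf
      exact ⟨_, hf, by simp [Sym2.map_pair_eq]⟩
  intro e' he'
  induction e' with
  | _ x y =>
  have he : G.Adj (φ.symm x) (φ.symm y) := φ.symm.map_adj_iff.2 (by simpa using he')
  obtain ⟨A, B, heA, hAG, hcard, hBc, ⟨ψ⟩⟩ := h s(φ.symm x, φ.symm y) he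
  refine ⟨Sym2.map ⇑φ '' A, Sym2.map ⇑φ '' B, ?_, ?_, ?_, ?_, ?_⟩
  · rw [hmem]; exact heA
  · rintro _ ⟨f, hf, rfl⟩
    induction f with
    | _ a b =>
      have := hAG hf
      simpa [Sym2.map_pair_eq] using φ.map_adj_iff.2 this
  · calc (Sym2.map ⇑φ '' A).ncard = A.ncard := Set.ncard_image_of_injective _ hinj
      _ ≤ 2 := hcard
  · rintro _ ⟨f, hf, rfl⟩
    induction f with
    | _ a b =>
      have h2 := hBc hf
      rw [mem_edgeSet, compl_adj] at h2
      simp only [Sym2.map_pair_eq, mem_edgeSet, compl_adj]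
      exact ⟨fun hab => h2.1 (φ.injective hab), fun hadj => h2.2 (φ.map_adj_iff.1 hadj)⟩
  · have χ : (G'.deleteEdges (Sym2.map ⇑φ '' A) ⊔ SimpleGraph.fromEdgeSet (Sym2.map ⇑φ '' B))
        ≃g (G.deleteEdges A ⊔ SimpleGraph.fromEdgeSet B) := by
      refine ⟨φ.toEquiv.symm, ?_⟩
      intro u v
      show (G.deleteEdges A ⊔ fromEdgeSet B).Adj (φ.symm u) (φ.symm v) ↔
        (G'.deleteEdges _ ⊔ fromEdgeSet _).Adj u v
      simp only [sup_adj, deleteEdges_adj, fromEdgeSet_adj, hmem]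
      constructor
      · rintro (⟨hadj, hA⟩ | ⟨hB, hne⟩)
        · exact Or.inl ⟨φ.symm.map_adj_iff.1 hadj, hA⟩
        · exact Or.inr ⟨hB, fun h2 => hne (by rw [h2])⟩
      · rintro (⟨hadj, hA⟩ | ⟨hB, hne⟩)
        · exact Or.inl ⟨φ.symm.map_adj_iff.2 hadj, hA⟩
        · exact Or.inr ⟨hB, fun h2 => hne (φ.toEquiv.symm.injective h2)⟩
    exact ⟨χ.trans ψ |>.trans φ⟩


/-- Bipartite complement of the standard cycle on `ZMod (2*n)`. -/
def G0 (n : ℕ) : SimpleGraph (ZMod (2*n)) where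
  Adj k l := (ZMod.castHom (dvd_mul_right 2 n) (ZMod 2)) k ≠ (ZMod.castHom (dvd_mul_right 2 n) (ZMod 2)) l
    ∧ l ≠ k + 1 ∧ k ≠ l + 1
  symm := by
    constructor
    rintro k l ⟨h1, h2, h3⟩
    exact ⟨h1.symm, h3, h2⟩
  loopless := by
    constructor
    rintro k ⟨h1, _, _⟩
    exact h1 rfl

lemma g0_adj (n : ℕ) (k l : ZMod (2*n)) : (G0 n).Adj k l ↔
    (ZMod.castHom (dvd_mul_right 2 n) (ZMod 2)) k ≠ (ZMod.castHom (dvd_mul_right 2 n) (ZMod 2)) l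
    ∧ l ≠ k + 1 ∧ k ≠ l + 1 := Iff.rfl


private lemma mem_pair_coords {α : Type*} (x : α → ℕ)
    (hxeq : ∀ u w : α, u = w ↔ x u = x w) (a b c d u v : α) :
    s(u,v) ∈ ({s(a,b), s(c,d)} : Set (Sym2 α)) ↔
      ((x u = x a ∧ x v = x b) ∨ (x u = x b ∧ x v = x a) ∨
       (x u = x c ∧ x v = x d) ∨ (x u = x d ∧ x v = x c)) := by
  simp only [Set.mem_insert_iff, Set.mem_singleton_iff, Sym2.eq_iff]
  rw [hxeq u a, hxeq v b, hxeq u b, hxeq v a, hxeq u c, hxeq v d, hxeq u d, hxeq v c]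
  tauto

set_option maxHeartbeats 2000000 in
private lemma claim2_nat (N m a b : ℕ) (hN : 8 ≤ N) (hm2 : 2 ≤ m) (hm2' : m ≤ N - 2)
    (ha : a < N) (hb : b < N) :
    (((if 1 ≤ b ∧ b ≤ m then m + 1 - b else b) = (if 1 ≤ a ∧ a ≤ m then m + 1 - a else a) + 1 ∨
      ((if 1 ≤ a ∧ a ≤ m then m + 1 - a else a) = N - 1 ∧ (if 1 ≤ b ∧ b ≤ m then m + 1 - b else b) = 0)) ∨
     ((if 1 ≤ a ∧ a ≤ m then m + 1 - a else a) = (if 1 ≤ b ∧ b ≤ m then m + 1 - b else b) + 1 ∨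
      ((if 1 ≤ b ∧ b ≤ m then m + 1 - b else b) = N - 1 ∧ (if 1 ≤ a ∧ a ≤ m then m + 1 - a else a) = 0)))
    ↔
    ((((b = a + 1 ∨ (a = N - 1 ∧ b = 0)) ∨ (a = b + 1 ∨ (b = N - 1 ∧ a = 0))) ∧
      ¬((a = 0 ∧ b = 1) ∨ (a = 1 ∧ b = 0) ∨ (a = m ∧ b = m+1) ∨ (a = m+1 ∧ b = m))) ∨
     ((a = 0 ∧ b = m) ∨ (a = m ∧ b = 0) ∨ (a = 1 ∧ b = m+1) ∨ (a = m+1 ∧ b = 1))) := by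
  split_ifs <;> omega

set_option maxHeartbeats 1000000 in
lemma g0_twoSwappable (n : ℕ) (hn : 4 ≤ n) : TwoSwappable (G0 n) := by
  haveI : NeZero (2*n) := ⟨by omega⟩
  haveI : Fact (1 < 2*n) := ⟨by omega⟩
  set N := 2*n with hNdef
  have hN : 8 ≤ N := by omega
  set π := (ZMod.castHom (dvd_mul_right 2 n) (ZMod 2)) with hπdef
  have pne : ∀ a : ZMod 2, a + 1 ≠ a := by decide
  have psum : ∀ a b : ZMod 2, a ≠ b → a + b = 1 := by decide
  intro e he
  induction e with
  | _ i j =>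
  rw [SimpleGraph.mem_edgeSet] at he
  obtain ⟨hpar, hji, hij⟩ := he
  have hne : i ≠ j := fun h => hpar (by rw [h])
  -- coordinates
  set x : ZMod N → ℕ := fun u => (u - i).val with hxdef
  set m := x j with hmdef
  have hxlt : ∀ u, x u < N := fun u => ZMod.val_lt _
  have hxinj : ∀ u v : ZMod N, x u = x v → u = v := by
    intro u v h
    have h2 : u - i = v - i := ZMod.val_injective N h
    exact sub_left_inj.mp h2
  have hxeq : ∀ (u w : ZMod N), (u = w ↔ x u = x w) :=
    fun u w => ⟨fun h => by rw [h], hxinj u w⟩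
  have hx_i : x i = 0 := by simp [hxdef]
  have hrepr : ∀ u : ZMod N, u = i + ((x u : ℕ) : ZMod N) := by
    intro u
    simp [hxdef, ZMod.natCast_zmod_val]
  have hcast : ∀ s : ℕ, s < N → x (i + (s : ZMod N)) = s := by
    intro s hs
    simp only [hxdef, add_sub_cancel_left]
    exact ZMod.val_cast_of_lt hs
  -- m bounds
  have hm0 : m ≠ 0 := by
    intro h
    exact hne (hxinj i j (by rw [hx_i, ← hmdef, h]))
  have hm1 : m ≠ 1 := by
    intro h
    apply hji
    have : j = i + ((1:ℕ) : ZMod N) := by rw [← h]; exact hrepr j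
    simpa using this
  have hmtop : m ≠ N - 1 := by
    intro h
    apply hij
    have h1 : j = i + ((N - 1 : ℕ) : ZMod N) := by rw [← h]; exact hrepr j
    have h2 : ((N - 1 : ℕ) : ZMod N) = -1 := by
      have h3 : ((N - 1 : ℕ) : ZMod N) = (N : ZMod N) - 1 := by
        push_cast [Nat.cast_sub (by omega : 1 ≤ N)]
        ring
      rw [h3, ZMod.natCast_self, zero_sub]
    rw [h2] at h1
    rw [h1]; ring
  have hmlt : m < N := hxlt j
  have hm2 : 2 ≤ m := by omega
  have hm2' : m ≤ N - 2 := by omega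
  -- basic coordinates
  have hx_i1 : x (i + 1) = 1 := by
    have := hcast 1 (by omega)
    simpa using this
  have hx_j : x j = m := rfl
  have hj1 : j + 1 = i + ((m + 1 : ℕ) : ZMod N) := by
    have h0 := hrepr j
    rw [hx_j] at h0
    rw [h0]
    push_cast
    ring
  have hx_j1 : x (j + 1) = m + 1 := by
    rw [hj1]
    exact hcast (m+1) (by omega)
  -- successor relation in coordinates
  have hval_succ : ∀ u : ZMod N, x (u + 1) = (x u + 1) % N := by
    intro u
    show ((u + 1) - i).val = _
    have h0 : (u + 1) - i = (u - i) + 1 := by ring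
    rw [h0, ZMod.val_add, ZMod.val_one]
  have E1 : ∀ u v : ZMod N, v = u + 1 ↔ (x v = x u + 1 ∨ (x u = N - 1 ∧ x v = 0)) := by
    intro u v
    rw [hxeq v (u+1), hval_succ]
    have hu := hxlt u
    have hv := hxlt v
    rcases Nat.lt_or_ge (x u + 1) N with hlt | hge
    · rw [Nat.mod_eq_of_lt hlt]; omega
    · have h0 : x u + 1 = N := by omega
      rw [h0, Nat.mod_self]; omega
  -- the swap sets
  set A : Set (Sym2 (ZMod N)) := {s(i,j), s(i+1,j+1)} with hAdef
  set B : Set (Sym2 (ZMod N)) := {s(i,i+1), s(j,j+1)} with hBdef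
  have hAmem : ∀ u v : ZMod N, s(u,v) ∈ A ↔
      ((x u = 0 ∧ x v = m) ∨ (x u = m ∧ x v = 0) ∨ (x u = 1 ∧ x v = m+1) ∨ (x u = m+1 ∧ x v = 1)) := by
    intro u v
    rw [hAdef, mem_pair_coords x hxeq i j (i+1) (j+1) u v, hx_i, hx_j, hx_i1, hx_j1]
  have hBmem : ∀ u v : ZMod N, s(u,v) ∈ B ↔
      ((x u = 0 ∧ x v = 1) ∨ (x u = 1 ∧ x v = 0) ∨ (x u = m ∧ x v = m+1) ∨ (x u = m+1 ∧ x v = m)) := by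
    intro u v
    rw [hBdef, mem_pair_coords x hxeq i (i+1) j (j+1) u v, hx_i, hx_j, hx_i1, hx_j1]
  -- A consists of edges
  have hA_edges : A ⊆ (G0 n).edgeSet := by
    intro e he'
    simp only [hAdef, Set.mem_insert_iff, Set.mem_singleton_iff] at he'
    rcases he' with rfl | rfl
    · exact ⟨hpar, hji, hij⟩
    · refine ⟨?_, ?_, ?_⟩
      · simp only [map_add, map_one]
        exact fun h => hpar ((add_left_inj 1).mp h)
      · intro h
        exact hji ((add_left_inj 1).mp h)
      · intro h
        exact hij ((add_left_inj 1).mp h)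
  have hcard : A.ncard ≤ 2 := by
    calc A.ncard ≤ ({s(i+1,j+1)} : Set (Sym2 (ZMod N))).ncard + 1 := Set.ncard_insert_le _ _
      _ = 2 := by rw [Set.ncard_singleton]
  have hB_compl : B ⊆ (G0 n)ᶜ.edgeSet := by
    intro e he'
    simp only [hBdef, Set.mem_insert_iff, Set.mem_singleton_iff] at he'
    rcases he' with rfl | rfl <;>
    · rw [SimpleGraph.mem_edgeSet, SimpleGraph.compl_adj]
      constructor
      · intro h
        have := (hxeq _ _).mp h
        simp only [hx_i, hx_i1, hx_j, hx_j1] at this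
        omega
      · rintro ⟨-, h2, -⟩
        exact h2 rfl
  -- facts about A and B members
  have FA : ∀ u v : ZMod N, s(u,v) ∈ A → (π u ≠ π v ∧ ¬(v = u + 1) ∧ ¬(u = v + 1)) := by
    intro u v h
    exact hA_edges h
  have FB : ∀ u v : ZMod N, s(u,v) ∈ B → (π u ≠ π v ∧ (v = u + 1 ∨ u = v + 1) ∧ u ≠ v) := by
    intro u v h
    have hR : v = u + 1 ∨ u = v + 1 := by
      rw [hBmem u v] at h
      rcases h with ⟨h1,h2⟩|⟨h1,h2⟩|⟨h1,h2⟩|⟨h1,h2⟩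
      · exact Or.inl ((E1 u v).mpr (Or.inl (by omega)))
      · exact Or.inr ((E1 v u).mpr (Or.inl (by omega)))
      · exact Or.inl ((E1 u v).mpr (Or.inl (by omega)))
      · exact Or.inr ((E1 v u).mpr (Or.inl (by omega)))
    have hp : π u ≠ π v := by
      rcases hR with rfl | rfl
      · rw [map_add, map_one]
        exact fun h' => pne (π u) h'.symm
      · rw [map_add, map_one]
        exact pne (π v)
    exact ⟨hp, hR, fun h' => hp (by rw [h'])⟩
  -- the 2-opt reversal map
  set τ : ZMod N → ZMod N := fun u => if 1 ≤ x u ∧ x u ≤ m then i + j + 1 - u else u with hτdef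
  have hτx : ∀ u, x (τ u) = if 1 ≤ x u ∧ x u ≤ m then m + 1 - x u else x u := by
    intro u
    by_cases h : 1 ≤ x u ∧ x u ≤ m
    · rw [if_pos h]
      have hτu : τ u = i + j + 1 - u := by rw [hτdef]; simp only [if_pos h]
      rw [hτu]
      have hrj := hrepr j
      have hru := hrepr u
      have key : (i + j + 1 - u) - i = ((m + 1 - x u : ℕ) : ZMod N) := by
        conv_lhs => rw [hrj, hru]
        rw [hx_j]
        push_cast [Nat.cast_sub (by omega : x u ≤ m + 1)]
        ring
      show ((i + j + 1 - u) - i).val = _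
      rw [key]
      exact ZMod.val_cast_of_lt (by omega)
    · rw [if_neg h]
      have hτu : τ u = u := by rw [hτdef]; simp only [if_neg h]
      rw [hτu]
  have hτinv : Function.Involutive τ := by
    intro u
    by_cases h : 1 ≤ x u ∧ x u ≤ m
    · have h1 : x (τ u) = m + 1 - x u := by rw [hτx u, if_pos h]
      have h2 : 1 ≤ x (τ u) ∧ x (τ u) ≤ m := by omega
      have hτu : τ u = i + j + 1 - u := by rw [hτdef]; simp only [if_pos h]
      have : τ (τ u) = i + j + 1 - τ u := by
        show (if 1 ≤ x (τ u) ∧ x (τ u) ≤ m then i + j + 1 - τ u else τ u) = _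
        rw [if_pos h2]
      rw [this, hτu]
      ring
    · have h1 : τ u = u := by rw [hτdef]; simp only [if_neg h]
      rw [h1, h1]
  -- parity is preserved
  have claim1 : ∀ u, π (τ u) = π u := by
    intro u
    have hlast : ∀ a : ZMod 2, 1 + 1 - a = a := by decide
    by_cases h : 1 ≤ x u ∧ x u ≤ m
    · have hτu : τ u = i + j + 1 - u := by rw [hτdef]; simp only [if_pos h]
      rw [hτu, map_sub, map_add, map_add, map_one, psum _ _ hpar]
      exact hlast (π u)
    · have hτu : τ u = u := by rw [hτdef]; simp only [if_neg h]
      rw [hτu]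
  -- the key combinatorial claim
  have claim2 : ∀ u v : ZMod N, (τ v = τ u + 1 ∨ τ u = τ v + 1) ↔
      (((v = u + 1 ∨ u = v + 1) ∧ s(u,v) ∉ B) ∨ s(u,v) ∈ A) := by
    intro u v
    rw [E1 (τ u) (τ v), E1 (τ v) (τ u), E1 u v, E1 v u, hAmem u v, hBmem u v, hτx u, hτx v]
    exact claim2_nat N m (x u) (x v) hN hm2 hm2' (hxlt u) (hxlt v)
  -- assemble the isomorphism
  refine ⟨A, B, Set.mem_insert _ _, hA_edges, hcard, hB_compl, ?_⟩
  constructor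
  refine ⟨hτinv.toPerm, ?_⟩
  intro u v
  show (G0 n).Adj (τ u) (τ v) ↔ _
  rw [g0_adj]
  simp only [sup_adj, deleteEdges_adj, fromEdgeSet_adj, g0_adj]
  rw [claim1 u, claim1 v]
  have hc2 := claim2 u v
  have hfa := FA u v
  have hfb := FB u v
  have hπne : π u ≠ π v → u ≠ v := fun h h' => h (by rw [h'])
  constructor
  · rintro ⟨h1, h2, h3⟩
    have hR : ¬(τ v = τ u + 1 ∨ τ u = τ v + 1) := by
      rintro (h | h)
      exacts [h2 h, h3 h]
    rw [hc2] at hR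
    by_cases hB' : s(u,v) ∈ B
    · exact Or.inr ⟨hB', hπne h1⟩
    · refine Or.inl ⟨⟨h1, ?_, ?_⟩, fun hA2 => hR (Or.inr hA2)⟩
      · exact fun h => hR (Or.inl ⟨Or.inl h, hB'⟩)
      · exact fun h => hR (Or.inl ⟨Or.inr h, hB'⟩)
  · rintro (⟨⟨h1, h2, h3⟩, hA'⟩ | ⟨hB', hne'⟩)
    · have hnt : ¬(τ v = τ u + 1 ∨ τ u = τ v + 1) := by
        rw [hc2]
        rintro (⟨hR2, hB2⟩ | hA2)
        · rcases hR2 with h | h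
          exacts [h2 h, h3 h]
        · exact hA' hA2
      exact ⟨h1, fun h => hnt (Or.inl h), fun h => hnt (Or.inr h)⟩
    · obtain ⟨hp, hR, -⟩ := hfb hB'
      have hnt : ¬(τ v = τ u + 1 ∨ τ u = τ v + 1) := by
        rw [hc2]
        rintro (⟨hR2, hB2⟩ | hA2)
        · exact hB2 hB'
        · rcases hR with h | h
          exacts [(hfa hA2).2.1 h, (hfa hA2).2.2 h]
      exact ⟨hp, fun h => hnt (Or.inl h), fun h => hnt (Or.inr h)⟩

lemma support_eq_map_getVert {V : Type*} {G : SimpleGraph V} {u v : V} (p : G.Walk u v) :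
    p.support = (List.range (p.length + 1)).map p.getVert := by
  induction p with
  | nil => simp [List.range_succ, Walk.getVert_zero]
  | @cons a b c h q ih =>
    rw [Walk.support_cons, Walk.length_cons, ih]
    conv_rhs => rw [List.range_succ_eq_map, List.map_cons, List.map_map]
    refine congrArg₂ List.cons rfl ?_
    apply List.map_congr_left
    intro i _
    exact (Walk.getVert_cons_succ q h).symm

lemma adj_bipartite_iff {n : ℕ} (x y : Fin n ⊕ Fin n) :
    (completeBipartiteGraph (Fin n) (Fin n)).Adj x y ↔ x.isLeft ≠ y.isLeft := by
  cases x <;> cases y <;> simp [completeBipartiteGraph]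

lemma walk_mem_edges_iff {V : Type*} {G : SimpleGraph V} {u v : V} (p : G.Walk u v)
    (e : Sym2 V) : e ∈ p.edges ↔ ∃ i < p.length, e = s(p.getVert i, p.getVert (i+1)) := by
  induction p with
  | nil => simp
  | @cons a b c h q ih =>
    simp only [Walk.edges_cons, List.mem_cons, ih, Walk.length_cons]
    constructor
    · rintro (rfl | ⟨i, hi, rfl⟩)
      · exact ⟨0, by omega, by simp [Walk.getVert_cons_succ, Walk.getVert_zero]⟩
      · exact ⟨i+1, by omega, by simp [Walk.getVert_cons_succ]⟩
    · rintro ⟨i, hi, rfl⟩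
      cases i with
      | zero =>
        left; simp [Walk.getVert_cons_succ, Walk.getVert_zero]
      | succ i =>
        right; exact ⟨i, by omega, by simp [Walk.getVert_cons_succ]⟩

private lemma bool_step (b c : Bool) (i : ℕ) (h : b = c ↔ i % 2 = 0) :
    ((!b) = c ↔ (i+1) % 2 = 0) := by
  cases b <;> cases c <;> simp_all <;> omega

private lemma bool_ne (b c d : Bool) (x y : ℕ) (h1 : b = d ↔ x % 2 = 0)
    (h2 : c = d ↔ y % 2 = 0) : (¬(b = c) ↔ ¬(x % 2 = y % 2)) := by
  cases b <;> cases c <;> cases d <;> simp_all <;> omega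

private lemma bool_flip (a b : Bool) (h : a ≠ b) : b = !a := by
  cases a <;> cases b <;> simp_all

lemma g0_iso (n : ℕ) (hn : 4 ≤ n) (a : Fin n ⊕ Fin n)
    (p : (completeBipartiteGraph (Fin n) (Fin n)).Walk a a)
    (hp : p.IsHamiltonianCycle) :
    Nonempty ((G0 n) ≃g (completeBipartiteGraph (Fin n) (Fin n) \
      SimpleGraph.fromEdgeSet {e | e ∈ p.edges})) := by
  haveI : NeZero (2*n) := ⟨by omega⟩
  have hcard : Fintype.card (Fin n ⊕ Fin n) = 2*n := by
    simp [Fintype.card_sum]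
    omega
  have hlen : p.length = 2*n := by rw [hp.length_eq, hcard]
  set f : ZMod (2*n) → Fin n ⊕ Fin n := fun k => p.getVert k.val with hfdef
  have hvlt : ∀ k : ZMod (2*n), k.val < 2*n := fun k => ZMod.val_lt k
  have hend : p.getVert (2*n) = a := by rw [← hlen]; exact p.getVert_length
  -- injectivity of getVert on indices
  have hnd : ((List.range (2*n)).map (fun i => p.getVert (i+1))).Nodup := by
    have h1 := hp.isCycle.support_nodup
    rw [support_eq_map_getVert, hlen, List.range_succ_eq_map, List.map_cons, List.map_map,
      List.tail_cons] at h1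
    exact h1
  have hinj1 : ∀ i j, i < 2*n → j < 2*n → p.getVert (i+1) = p.getVert (j+1) → i = j := by
    intro i j hi hj hEq
    exact List.inj_on_of_nodup_map hnd (List.mem_range.mpr hi) (List.mem_range.mpr hj) hEq
  have hinj2 : ∀ i j, i < 2*n → j < 2*n → p.getVert i = p.getVert j → i = j := by
    intro i j hi hj hEq
    rcases Nat.eq_zero_or_pos i with rfl | hi0 <;> rcases Nat.eq_zero_or_pos j with rfl | hj0
    · rfl
    · exfalso
      have h2 : p.getVert ((2*n-1)+1) = p.getVert ((j-1)+1) := by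
        rw [show 2*n-1+1 = 2*n by omega, hend, show (j-1)+1 = j by omega, ← hEq,
          Walk.getVert_zero]
      have := hinj1 _ _ (by omega) (by omega) h2
      omega
    · exfalso
      have h2 : p.getVert ((2*n-1)+1) = p.getVert ((i-1)+1) := by
        rw [show 2*n-1+1 = 2*n by omega, hend, show (i-1)+1 = i by omega, hEq,
          Walk.getVert_zero]
      have := hinj1 _ _ (by omega) (by omega) h2
      omega
    · have h2 : p.getVert ((i-1)+1) = p.getVert ((j-1)+1) := by
        rw [show i-1+1 = i by omega, show j-1+1 = j by omega]; exact hEq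
      have := hinj1 _ _ (by omega) (by omega) h2
      omega
  have hfinj : Function.Injective f := by
    intro k l h
    exact ZMod.val_injective _ (hinj2 k.val l.val (hvlt k) (hvlt l) h)
  have hfbij : Function.Bijective f :=
    (Fintype.bijective_iff_injective_and_card f).mpr ⟨hfinj, by rw [ZMod.card, hcard]⟩
  -- parity of sides
  have hflip : ∀ i, i < 2*n → (p.getVert (i+1)).isLeft = !(p.getVert i).isLeft := by
    intro i hi
    have hadj := p.adj_getVert_succ (by omega : i < p.length)
    have h2 := (adj_bipartite_iff _ _).mp hadj
    exact bool_flip _ _ h2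
  have hside : ∀ i, i ≤ 2*n → ((p.getVert i).isLeft = a.isLeft ↔ i % 2 = 0) := by
    intro i
    induction i with
    | zero => intro _; simp
    | succ i ih =>
      intro hi
      have hrec := ih (by omega)
      rw [hflip i (by omega)]
      exact bool_step _ _ i hrec
  have hKadj : ∀ k l : ZMod (2*n),
      (completeBipartiteGraph (Fin n) (Fin n)).Adj (f k) (f l) ↔
        ¬(k.val % 2 = l.val % 2) := by
    intro k l
    rw [adj_bipartite_iff]
    have e1 := hside k.val (le_of_lt (hvlt k))
    have e2 := hside l.val (le_of_lt (hvlt l))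
    show ¬((p.getVert k.val).isLeft = (p.getVert l.val).isLeft) ↔ _
    exact bool_ne _ _ _ _ _ e1 e2
  have hπ : ∀ k : ZMod (2*n),
      (ZMod.castHom (dvd_mul_right 2 n) (ZMod 2)) k = ((k.val : ℕ) : ZMod 2) := by
    intro k
    rw [ZMod.castHom_apply]
    exact (ZMod.natCast_val k).symm
  have hπne : ∀ k l : ZMod (2*n),
      ((ZMod.castHom (dvd_mul_right 2 n) (ZMod 2)) k ≠ (ZMod.castHom (dvd_mul_right 2 n) (ZMod 2)) l
        ↔ ¬(k.val % 2 = l.val % 2)) := by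
    intro k l
    rw [hπ k, hπ l]
    exact not_congr ((ZMod.natCast_eq_natCast_iff _ _ _).trans Iff.rfl)
  -- edges of the cycle
  have hgetf : ∀ i, i ≤ 2*n → p.getVert i = f ((i : ℕ) : ZMod (2*n)) := by
    intro i hi
    rcases Nat.lt_or_ge i (2*n) with h | h
    · show _ = p.getVert (((i : ℕ) : ZMod (2*n)).val)
      rw [ZMod.val_cast_of_lt h]
    · have h2 : i = 2*n := by omega
      subst h2
      rw [hend]
      show _ = p.getVert (((2*n : ℕ) : ZMod (2*n)).val)
      rw [ZMod.natCast_self, ZMod.val_zero, Walk.getVert_zero]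
  have hcastsucc : ∀ k : ZMod (2*n), ((k.val + 1 : ℕ) : ZMod (2*n)) = k + 1 := by
    intro k
    push_cast
    rw [ZMod.natCast_zmod_val]
  have hedge : ∀ k l : ZMod (2*n), s(f k, f l) ∈ p.edges ↔ (l = k + 1 ∨ k = l + 1) := by
    intro k l
    rw [walk_mem_edges_iff]
    constructor
    · rintro ⟨i, hi, heq⟩
      rw [hlen] at hi
      rw [hgetf i (by omega), hgetf (i+1) (by omega), Sym2.eq_iff] at heq
      have hip : ((i + 1 : ℕ) : ZMod (2*n)) = ((i : ℕ) : ZMod (2*n)) + 1 := by push_cast; ring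
      rw [hip] at heq
      rcases heq with ⟨h1, h2⟩ | ⟨h1, h2⟩
      · left
        rw [hfinj h1, hfinj h2]
      · right
        rw [hfinj h1, hfinj h2]
    · rintro (h | h)
      · refine ⟨k.val, by rw [hlen]; exact hvlt k, ?_⟩
        rw [hgetf (k.val+1) (by have := hvlt k; omega), hcastsucc, ← h]
      · refine ⟨l.val, by rw [hlen]; exact hvlt l, ?_⟩
        rw [hgetf (l.val+1) (by have := hvlt l; omega), hcastsucc, ← h]
        exact Sym2.eq_swap
  refine ⟨⟨Equiv.ofBijective f hfbij, ?_⟩⟩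
  intro k l
  show (completeBipartiteGraph (Fin n) (Fin n) \ SimpleGraph.fromEdgeSet {e | e ∈ p.edges}).Adj
    (f k) (f l) ↔ (G0 n).Adj k l
  rw [sdiff_adj, fromEdgeSet_adj, g0_adj, hKadj, hπne, Set.mem_setOf_eq, hedge]
  have hknl : ¬(k.val % 2 = l.val % 2) → f k ≠ f l := by
    intro h1 hfe
    exact h1 (by rw [hfinj hfe])
  constructor
  · rintro ⟨h1, h2⟩
    exact ⟨h1, fun hh => h2 ⟨Or.inl hh, hknl h1⟩, fun hh => h2 ⟨Or.inr hh, hknl h1⟩⟩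
  · rintro ⟨h1, h2, h3⟩
    exact ⟨h1, fun hh => hh.1.elim h2 h3⟩

theorem stmt_5 (n : ℕ) (hn : 4 ≤ n) (a : Fin n ⊕ Fin n)
    (p : (completeBipartiteGraph (Fin n) (Fin n)).Walk a a)
    (hp : p.IsHamiltonianCycle) :
    TwoSwappable (completeBipartiteGraph (Fin n) (Fin n) \
      SimpleGraph.fromEdgeSet {e | e ∈ p.edges}) := by
  obtain ⟨φ⟩ := g0_iso n hn a p hp
  exact twoSwappable_of_iso φ (g0_twoSwappable n hn)
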